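/- For every $\varepsilon \in [0, 2/3]$ and every $y \in \mathbb{R}$: $e^{\varepsilon y^2}(1 - \varepsilon \sin^2 y) \ge 1$. -/

import Mathlib

open Real Set

private lemma mono_aux18 (f f' : ℝ → ℝ) (hf : ∀ x, HasDerivAt f (f' x) x)
    (h0 : ∀ x, 0 ≤ x → 0 ≤ f' x) : MonotoneOn f (Ici 0) := by
  apply monotoneOn_of_hasDerivWithinAt_nonneg (convex_Ici 0)
    (fun x _ => (hf x).continuousAt.continuousWithinAt)
    (fun x _ => (hf x).hasDerivWithinAt)
  intro x hx
  exact h0 x (le_of_lt (by simpa [interior_Ici] using hx))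

private lemma sin_ge18 (x : ℝ) (hx : 0 ≤ x) : x - x^3/6 ≤ Real.sin x := by
  have h : ∀ t : ℝ, HasDerivAt (fun t => Real.sin t - (t - t^3/6)) (Real.cos t - (1 - t^2/2)) t := by
    intro t
    have h2 : HasDerivAt (fun t : ℝ => t - t^3/6) (1 - t^2/2) t := by
      have := (hasDerivAt_id t).sub ((hasDerivAt_pow 3 t).div_const 6)
      convert this using 1
      all_goals try rfl
      ring
    exact (Real.hasDerivAt_sin t).sub h2
  have := mono_aux18 _ _ h (fun t _ => by nlinarith [Real.one_sub_sq_div_two_le_cos (x := t)])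
    (self_mem_Ici) hx hx
  simpa using this

private lemma cos_le18 (x : ℝ) (hx : 0 ≤ x) : Real.cos x ≤ 1 - x^2/2 + x^4/24 := by
  have h : ∀ t : ℝ, HasDerivAt (fun t => (1 - t^2/2 + t^4/24) - Real.cos t)
      ((Real.sin t - (t - t^3/6))) t := by
    intro t
    have h2 : HasDerivAt (fun t : ℝ => 1 - t^2/2 + t^4/24) (-(t - t^3/6)) t := by
      have := (((hasDerivAt_pow 2 t).div_const 2).const_sub 1).add ((hasDerivAt_pow 4 t).div_const 24)
      convert this using 1
      all_goals try rfl
      ring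
    have := h2.sub (Real.hasDerivAt_cos t)
    convert this using 1
    all_goals try rfl
    ring
  have := mono_aux18 _ _ h (fun t ht => by linarith [sin_ge18 t ht]) self_mem_Ici hx hx
  simp at this
  linarith

private lemma sin_le18 (x : ℝ) (hx : 0 ≤ x) : Real.sin x ≤ x - x^3/6 + x^5/120 := by
  have h : ∀ t : ℝ, HasDerivAt (fun t => (t - t^3/6 + t^5/120) - Real.sin t)
      ((1 - t^2/2 + t^4/24) - Real.cos t) t := by
    intro t
    have h2 : HasDerivAt (fun t : ℝ => t - t^3/6 + t^5/120) (1 - t^2/2 + t^4/24) t := by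
      have := ((hasDerivAt_id t).sub ((hasDerivAt_pow 3 t).div_const 6)).add
        ((hasDerivAt_pow 5 t).div_const 120)
      convert this using 1
      all_goals try rfl
      ring
    exact h2.sub (Real.hasDerivAt_sin t)
  have := mono_aux18 _ _ h (fun t ht => by linarith [cos_le18 t ht]) self_mem_Ici hx hx
  simp at this
  linarith

private lemma key18 (e x : ℝ) (he0 : 0 ≤ e) (he : e ≤ 2/3) (hx0 : 0 ≤ x) (hx : x ≤ 3) :
    1 ≤ (1 + e*x + (e*x)^2/2 + (e*x)^3/6) * (1 - e*(x - x^2/3 + 2*x^3/45)) := by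
  have hu0 : 0 ≤ e*x := mul_nonneg he0 hx0
  have hux : 3*(e*x) ≤ 2*x := by nlinarith
  have hu2 : e*x ≤ 2 := by nlinarith
  have hA : (0:ℝ) < 1 + e*x + (e*x)^2/2 + (e*x)^3/6 := by positivity
  have hf : (e*x)*(5-(e*x))/10 ≤ x*(15-2*x)/45 := by
    nlinarith [mul_nonneg (by linarith : (0:ℝ) ≤ 2*x - 3*(e*x)) (by linarith : (0:ℝ) ≤ 15 - 2*x - 3*(e*x))]
  have h1 : (e*x) * ((e*x)*(5-(e*x))/10) ≤ (e*x) * (x*(15-2*x)/45) :=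
    mul_le_mul_of_nonneg_left hf hu0
  have h2 : (1 + e*x + (e*x)^2/2 + (e*x)^3/6) * ((e*x) * ((e*x)*(5-(e*x))/10)) ≤
      (1 + e*x + (e*x)^2/2 + (e*x)^3/6) * ((e*x) * (x*(15-2*x)/45)) :=
    mul_le_mul_of_nonneg_left h1 hA.le
  have hM : 0 ≤ (e*x)^2 * ((e*x)/60 * (4 - (e*x) + 2*(e*x)^2 - (e*x)^3)) := by
    apply mul_nonneg (sq_nonneg _)
    apply mul_nonneg (by positivity)
    nlinarith [sq_nonneg (e*x), mul_nonneg (mul_nonneg hu0 hu0) (by linarith : (0:ℝ) ≤ 2 - e*x)]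
  nlinarith [h2, hM]

private lemma main_aux18 (ε : ℝ) (hε0 : 0 ≤ ε) (hε : ε ≤ 2 / 3) (y : ℝ) (hy : 0 ≤ y) :
    1 ≤ Real.exp (ε * y ^ 2) * (1 - ε * Real.sin y ^ 2) := by
  have hs1 : Real.sin y ^ 2 ≤ 1 := Real.sin_sq_le_one y
  have hs0 : (0:ℝ) ≤ Real.sin y ^ 2 := sq_nonneg _
  have hpos : (0:ℝ) ≤ 1 - ε * Real.sin y ^ 2 := by nlinarith
  by_cases hy3 : y ^ 2 ≤ 3
  · -- small case
    have hy18 : y ≤ 1.8 := by nlinarith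
    have hsin0 : 0 ≤ Real.sin y :=
      Real.sin_nonneg_of_nonneg_of_le_pi hy (by linarith [Real.pi_gt_three])
    have hsin : Real.sin y ≤ y - y^3/6 + y^5/120 := sin_le18 y hy
    have hq : Real.sin y ^ 2 ≤ (y - y^3/6 + y^5/120)^2 := pow_le_pow_left₀ hsin0 hsin 2
    have hsp : (y - y^3/6 + y^5/120)^2 ≤ y^2 - y^4/3 + 2*y^6/45 := by
      nlinarith [mul_nonneg (pow_nonneg hy 8) (by nlinarith : (0:ℝ) ≤ 40 - y^2)]
    have hexp : 1 + ε*y^2 + (ε*y^2)^2/2 + (ε*y^2)^3/6 ≤ Real.exp (ε*y^2) := by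
      have := Real.sum_le_exp_of_nonneg (mul_nonneg hε0 (sq_nonneg y)) 4
      simp [Finset.sum_range_succ, Nat.factorial] at this
      linarith
    have hkey := key18 ε (y^2) hε0 hε (sq_nonneg y) hy3
    have hA : (0:ℝ) < 1 + ε*y^2 + (ε*y^2)^2/2 + (ε*y^2)^3/6 := by positivity
    have hstep1 : (1 + ε*y^2 + (ε*y^2)^2/2 + (ε*y^2)^3/6) * (1 - ε*(y^2 - (y^2)^2/3 + 2*(y^2)^3/45)) ≤
        (1 + ε*y^2 + (ε*y^2)^2/2 + (ε*y^2)^3/6) * (1 - ε * Real.sin y ^ 2) := by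
      apply mul_le_mul_of_nonneg_left _ hA.le
      have : Real.sin y ^ 2 ≤ y^2 - (y^2)^2/3 + 2*(y^2)^3/45 := by nlinarith [hq, hsp]
      nlinarith [mul_le_mul_of_nonneg_left this hε0]
    have hstep2 : (1 + ε*y^2 + (ε*y^2)^2/2 + (ε*y^2)^3/6) * (1 - ε * Real.sin y ^ 2) ≤
        Real.exp (ε * y ^ 2) * (1 - ε * Real.sin y ^ 2) :=
      mul_le_mul_of_nonneg_right hexp hpos
    linarith [hkey, hstep1, hstep2]
  · -- large case
    push_neg at hy3
    have h1 : 1 + ε*y^2 ≤ Real.exp (ε*y^2) := by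
      have := Real.add_one_le_exp (ε*y^2)
      linarith
    have hstep : (1 + ε*y^2) * (1 - ε * Real.sin y ^ 2) ≤
        Real.exp (ε * y ^ 2) * (1 - ε * Real.sin y ^ 2) :=
      mul_le_mul_of_nonneg_right h1 hpos
    have inner : Real.sin y ^ 2 + ε * y^2 * Real.sin y ^ 2 ≤ y^2 := by
      nlinarith [mul_nonneg (mul_nonneg (sub_nonneg.2 hε) (sq_nonneg y)) hs0,
        mul_nonneg (mul_nonneg hε0 (sq_nonneg y)) (sub_nonneg.2 hs1)]
    nlinarith [hstep, mul_nonneg hε0 (by linarith : (0:ℝ) ≤ y^2 - Real.sin y ^ 2 - ε * y^2 * Real.sin y ^ 2)]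

theorem stmt_18 (ε : ℝ) (hε0 : 0 ≤ ε) (hε : ε ≤ 2 / 3) (y : ℝ) :
    1 ≤ Real.exp (ε * y ^ 2) * (1 - ε * Real.sin y ^ 2) := by
  rcases le_total 0 y with hy | hy
  · exact main_aux18 ε hε0 hε y hy
  · have := main_aux18 ε hε0 hε (-y) (by linarith)
    simpa using this
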